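/- Let α = 1, n ≥ 1, and let I_n = {0,1,…,n} be the path graph on n+1 vertices with weights r : I_n → {0,1}. Suppose that in the cumulatively merged partition 𝒞(I_n, r, 1) the vertices 0 and n belong to the same cluster. Then I_n, viewed as a subset of the path graph ℤ, is a stable set for the CMP constructed with the reversed weights r̃(x) = 1 − r(x) for x ∈ I_n. -/

import Mathlib

open scoped ENNReal NNReal
open MeasureTheory

namespace CMPPaper

variable {V : Type*}

/-- Graph distance between two subsets of vertices, valued in `ℝ≥0∞`
(`⊤` when one of the sets is empty). -/
noncomputable def setDist (G : SimpleGraph V) (A B : Set V) : ℝ≥0∞ :=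
  ⨅ (x : A) (y : B), (G.dist x.1 y.1 : ℝ≥0∞)

/-- Total weight `r(A) = Σ_{x ∈ A} r(x) ∈ [0,∞]` of a set of vertices. -/
noncomputable def wt (r : V → ℝ≥0) (A : Set V) : ℝ≥0∞ :=
  ∑' x : A, (r x.1 : ℝ≥0∞)

/-- A partition (encoded as a setoid) of the vertex set is `(r,α)`-admissible if any two
distinct clusters `C ≠ C'` satisfy `d(C,C') > min(r(C), r(C'))^α`. -/
def Admissible (G : SimpleGraph V) (r : V → ℝ≥0) (α : ℝ) (s : Setoid V) : Prop :=
  ∀ C ∈ s.classes, ∀ C' ∈ s.classes, C ≠ C' →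
    (min (wt r C) (wt r C')) ^ α < setDist G C C'

/-- The cumulatively merged partition: the finest `(r,α)`-admissible partition, i.e. the
intersection (infimum as setoids) of all `(r,α)`-admissible partitions. -/
noncomputable def CMP (G : SimpleGraph V) (r : V → ℝ≥0) (α : ℝ) : Setoid V :=
  sInf {s : Setoid V | Admissible G r α s}

/-- The cluster of the CMP containing `x`. -/
def cluster (G : SimpleGraph V) (r : V → ℝ≥0) (α : ℝ) (x : V) : Set V :=
  {y | (CMP G r α) x y}

/-- The ball `B(A, l) = {z : d(z,A) ≤ l}` around a set of vertices. -/
def ballSet (G : SimpleGraph V) (A : Set V) (l : ℝ≥0∞) : Set V :=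
  {z | ∃ a ∈ A, (G.dist z a : ℝ≥0∞) ≤ l}

/-- A subset `H` of the vertices is stable if every cluster `C` of the CMP of the induced
subgraph on `H` (with the restricted weights) satisfies `B(C, r(C)^α) ⊆ H`. -/
def IsStable (G : SimpleGraph V) (r : V → ℝ≥0) (α : ℝ) (H : Set V) : Prop :=
  ∀ C ∈ (CMP (G.induce H) (fun x : H => r x) α).classes,
    ballSet G (Subtype.val '' C) ((wt (fun x : H => r x) C) ^ α) ⊆ H

/-- The stabiliser of `W`: the smallest stable set containing `W`, i.e. the intersection of
all stable sets containing `W`. -/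
def stabiliser (G : SimpleGraph V) (r : V → ℝ≥0) (α : ℝ) (W : Set V) : Set V :=
  ⋂₀ {H : Set V | IsStable G r α H ∧ W ⊆ H}

open Classical in
/-- The merging operator `M_{x,y}`: if the clusters of `x` and `y` are distinct and
`d(x,y) ≤ min(r(𝒞_x), r(𝒞_y))^α`, merge them (take the smallest coarsening of `s`
relating `x` and `y`); otherwise leave the partition unchanged. -/
noncomputable def mergeOp (G : SimpleGraph V) (r : V → ℝ≥0) (α : ℝ) (x y : V)
    (s : Setoid V) : Setoid V :=
  if ¬ s x y ∧ (G.dist x y : ℝ≥0∞) ≤ (min (wt r {u | s x u}) (wt r {u | s y u})) ^ α then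
    sInf {t : Setoid V | s ≤ t ∧ t x y}
  else s

/-- The relation `C ↦ C'` (`C'` descends from `C`) on clusters of the CMP. -/
def Descends (G : SimpleGraph V) (r : V → ℝ≥0) (α : ℝ) (C C' : Set V) : Prop :=
  C ∈ (CMP G r α).classes ∧ C' ∈ (CMP G r α).classes ∧ C ≠ C' ∧
    setDist G C C' ≤ (wt r C) ^ α

/-- Integer part of an extended nonnegative real, valued in `ℕ∞`. -/
noncomputable def efloor (x : ℝ≥0∞) : ℕ∞ :=
  if x = ⊤ then ⊤ else (⌊x.toReal⌋₊ : ℕ∞)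

/-- The bound `max(w log₂ w / 2, 0)` (for `α = 1`), resp. `w^α/(2^α-2)` (for `α ≠ 1`),
on the diameter of a cluster of total weight `w`. -/
noncomputable def diamBound (α : ℝ) (w : ℝ≥0∞) : ℝ≥0∞ :=
  if α = 1 then
    (if w = ⊤ then ⊤ else ENNReal.ofReal (max (w.toReal * Real.logb 2 w.toReal / 2) 0))
  else w ^ α / ((2 : ℝ≥0∞) ^ α - 2)

/-- The relation `C →η C'` on clusters of the CMP:  `d(C,C') ≤ η·r(C)^α`. -/
def EtaDesc (G : SimpleGraph V) (r : V → ℝ≥0) (α η : ℝ) (C C' : Set V) : Prop :=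
  C ∈ (CMP G r α).classes ∧ C' ∈ (CMP G r α).classes ∧ C ≠ C' ∧
    setDist G C C' ≤ ENNReal.ofReal η * (wt r C) ^ α

/-- The `η`-stabiliser of a vertex `x`: the union of `𝒞_x` together with all clusters
reachable from `𝒞_x` by a finite oriented path for the relation `→η`. -/
def etaStab (G : SimpleGraph V) (r : V → ℝ≥0) (α η : ℝ) (x : V) : Set V :=
  ⋃₀ {C' | Relation.ReflTransGen (EtaDesc G r α η) (cluster G r α x) C'}

/-- The path graph on `ℕ`: `m` and `m+1` are adjacent. -/
def pathGraphN : SimpleGraph ℕ := SimpleGraph.fromRel (fun m n => n = m + 1)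

/-- The two-sided path graph on `ℤ`: `k` and `k+1` are adjacent. -/
def pathGraphZ : SimpleGraph ℤ := SimpleGraph.fromRel (fun a b => b = a + 1)

/-- The hypercubic lattice `ℤ^d`: `x` and `y` are adjacent iff `‖x-y‖₁ = 1`. -/
def latticeGraph (d : ℕ) : SimpleGraph (Fin d → ℤ) :=
  SimpleGraph.fromRel (fun x y => (∑ i, |x i - y i|) = 1)

/-- The CMP of the weighted graph `(G, r)` with expansion exponent `α` has an
infinite cluster. -/
def HasInfiniteCluster (G : SimpleGraph V) (r : V → ℝ≥0) (α : ℝ) : Prop :=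
  ∃ C ∈ (CMP G r α).classes, C.Infinite

/-- `w` is an i.i.d. family of Bernoulli(`p`) weights indexed by `V`, under the
probability measure `μ`. -/
def IsBernoulliField {Ω : Type*} [MeasurableSpace Ω] (μ : Measure Ω)
    (p : ℝ) (w : Ω → V → ℝ≥0) : Prop :=
  (∀ x : V, Measurable fun ω => w ω x) ∧
  (∀ ω x, w ω x = 0 ∨ w ω x = 1) ∧
  (∀ x : V, μ {ω | w ω x = 1} = ENNReal.ofReal p) ∧
  ProbabilityTheory.iIndepFun (fun x ω => w ω x) μ

/-- `w` is an i.i.d. family of weights indexed by `V`, each with law `ν`, under the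
probability measure `μ`. -/
def IsIIDField {Ω : Type*} [MeasurableSpace Ω] (μ : Measure Ω)
    (ν : Measure ℝ≥0) (w : Ω → V → ℝ≥0) : Prop :=
  (∀ x : V, Measurable fun ω => w ω x) ∧
  (∀ x : V, μ.map (fun ω => w ω x) = ν) ∧
  ProbabilityTheory.iIndepFun (fun x ω => w ω x) μ

/-! ### Auxiliary lemmas for the duality theorem -/

section DualityAux

open SimpleGraph

/-- Adjacency in the path graph on `ℤ`. -/
lemma pathZ_adj {a b : ℤ} : pathGraphZ.Adj a b ↔ a ≠ b ∧ (b = a + 1 ∨ a = b + 1) := by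
  simp [pathGraphZ, SimpleGraph.fromRel_adj]

lemma pathZ_adj_step (a : ℤ) : pathGraphZ.Adj a (a + 1) := by
  rw [pathZ_adj]; omega

/-- Any walk in the path graph on `ℤ` has length at least `|b - a|`. -/
lemma pathZ_walk_len {a b : ℤ} (p : pathGraphZ.Walk a b) : (b - a).natAbs ≤ p.length := by
  induction p with
  | nil => simp
  | @cons u v w h p ih =>
      rw [SimpleGraph.Walk.length_cons]
      rw [pathZ_adj] at h
      omega

lemma pathZ_reachable (a b : ℤ) : pathGraphZ.Reachable a b := by
  obtain ⟨k, hk⟩ : ∃ k : ℕ, b - a = k ∨ a - b = k :=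
    ⟨(b - a).natAbs, by omega⟩
  induction k generalizing b with
  | zero =>
      have hab : a = b := by omega
      subst hab
      exact SimpleGraph.Reachable.refl a
  | succ m ih =>
      rcases hk with hk | hk
      · have : pathGraphZ.Reachable a (b - 1) := ih (b - 1) (by omega)
        exact this.trans (by simpa using (pathZ_adj_step (b - 1)).reachable)
      · have : pathGraphZ.Reachable a (b + 1) := ih (b + 1) (by omega)
        exact this.trans ((pathZ_adj_step b).symm.reachable)

lemma pathZ_dist_ge (a b : ℤ) : (b - a).natAbs ≤ pathGraphZ.dist a b := by
  obtain ⟨p, hp⟩ := (pathZ_reachable a b).exists_walk_length_eq_dist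
  rw [← hp]; exact pathZ_walk_len p

end DualityAux
section DualityAux2

open SimpleGraph

lemma setDist_le_dist {W : Type*} {G : SimpleGraph W} {A B : Set W} {x y : W}
    (hx : x ∈ A) (hy : y ∈ B) : setDist G A B ≤ G.dist x y := by
  rw [setDist]
  exact iInf_le_of_le ⟨x, hx⟩ (iInf_le_of_le ⟨y, hy⟩ le_rfl)

lemma le_setDist {W : Type*} {G : SimpleGraph W} {A B : Set W} {m : ℕ}
    (h : ∀ x ∈ A, ∀ y ∈ B, m ≤ G.dist x y) : (m : ℝ≥0∞) ≤ setDist G A B :=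
  le_iInf fun x => le_iInf fun y => by exact_mod_cast h x.1 x.2 y.1 y.2

lemma setDist_comm' {W : Type*} (G : SimpleGraph W) (A B : Set W) :
    setDist G A B = setDist G B A := by
  rw [setDist, setDist, iInf_comm]
  exact iInf_congr fun y => iInf_congr fun x => by rw [SimpleGraph.dist_comm]

lemma setDist_anti {W : Type*} {G : SimpleGraph W} {A B A' B' : Set W}
    (hA : A' ⊆ A) (hB : B' ⊆ B) : setDist G A B ≤ setDist G A' B' :=
  le_iInf fun x => le_iInf fun y => setDist_le_dist (hA x.2) (hB y.2)

lemma wt_singleton' {W : Type*} (r : W → ℝ≥0) (x : W) : wt r {x} = (r x : ℝ≥0∞) := by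
  rw [wt]
  exact tsum_singleton x (fun v => ((r v : ℝ≥0∞)))

lemma wt_mono {W : Type*} (r : W → ℝ≥0) {A B : Set W} (h : A ⊆ B) : wt r A ≤ wt r B := by
  rw [wt, wt]
  exact Summable.tsum_le_tsum_of_inj (Set.inclusion h) (Set.inclusion_injective h)
    (fun c _ => zero_le) (fun b => le_rfl) ENNReal.summable ENNReal.summable

lemma wt_eq_ncard {W : Type*} [Finite W] (r : W → ℝ≥0) {C : Set W}
    (h : ∀ x ∈ C, r x = 1) : wt r C = (C.ncard : ℝ≥0∞) := by
  classical
  haveI := Fintype.ofFinite W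
  rw [wt, tsum_fintype, ← Nat.card_coe_set_eq, Nat.card_eq_fintype_card]
  calc (∑ x : C, ((r x.1 : ℝ≥0∞)))
      = ∑ _x : C, 1 := Finset.sum_congr rfl (fun x _ => by rw [h x.1 x.2]; norm_num)
    _ = (Fintype.card C : ℝ≥0∞) := by
        rw [Finset.sum_const, Finset.card_univ]; simp

lemma ncard_le_Ioo {W : Type*} [Finite W] (f : W → ℤ) (hf : Function.Injective f)
    {S : Set W} {p q : ℤ} (hne : S.Nonempty) (h : ∀ x ∈ S, p < f x ∧ f x < q) :
    (S.ncard : ℤ) ≤ q - p - 1 := by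
  classical
  haveI := Fintype.ofFinite W
  have h1 : (S.toFinset.image f) ⊆ Finset.Ioo p q := by
    intro z hz
    simp only [Finset.mem_image, Set.mem_toFinset] at hz
    obtain ⟨x, hx, rfl⟩ := hz
    exact Finset.mem_Ioo.mpr (h x hx)
  have h2 : S.toFinset.card ≤ (Finset.Ioo p q).card := by
    rw [← Finset.card_image_of_injOn (fun a _ b _ hab => hf hab)]
    exact Finset.card_le_card h1
  rw [Set.ncard_eq_toFinset_card']
  rw [Int.card_Ioo] at h2
  obtain ⟨x, hx⟩ := hne
  have := h x hx
  omega

lemma class_eq_of_rel {W : Type*} (s : Setoid W) {c c' : W} (h : s c c') :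
    ({x | s x c} : Set W) = {x | s x c'} :=
  Set.ext fun x => ⟨fun hx => s.trans' hx h, fun hx => s.trans' hx (s.symm' h)⟩

lemma not_rel_of_classes_ne {W : Type*} (s : Setoid W) {c c' : W}
    (h : ({x | s x c} : Set W) ≠ {x | s x c'}) : ¬ s c c' :=
  fun hrel => h (class_eq_of_rel s hrel)

lemma rel_of_mem_class {W : Type*} (s : Setoid W) {c x y : W} (hx : s x c) (hy : s y c) :
    s x y := s.trans' hx (s.symm' hy)

lemma cmp_rel {W : Type*} {G : SimpleGraph W} {r : W → ℝ≥0} {α : ℝ} {s : Setoid W}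
    (hs : Admissible G r α s) {x y : W} (h : CMP G r α x y) : s x y :=
  Setoid.le_def.mp (sInf_le (show s ∈ {t : Setoid W | Admissible G r α t} from hs)) h

lemma cmp_admissible {W : Type*} (G : SimpleGraph W) (r : W → ℝ≥0) :
    Admissible G r 1 (CMP G r 1) := by
  intro C hC C' hC' hne
  obtain ⟨c, rfl⟩ := hC
  obtain ⟨c', rfl⟩ := hC'
  have hncc : ¬ (CMP G r 1) c c' := not_rel_of_classes_ne _ hne
  have hex : ∃ s : Setoid W, Admissible G r 1 s ∧ ¬ s c c' := by
    by_contra hno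
    push_neg at hno
    exact hncc (fun s hs => hno s hs)
  obtain ⟨s, hs, hscc⟩ := hex
  have h1 : {x | CMP G r 1 x c} ⊆ {x | s x c} := fun x hx => cmp_rel hs hx
  have h2 : {x | CMP G r 1 x c'} ⊆ {x | s x c'} := fun x hx => cmp_rel hs hx
  have hne' : ({x | s x c} : Set W) ≠ {x | s x c'} := by
    intro heq
    exact hscc (by
      have hc' : c' ∈ ({x | s x c'} : Set W) := s.refl' c'
      rw [← heq] at hc'
      exact s.symm' hc')
  have hadm := hs _ (Setoid.mem_classes s c) _ (Setoid.mem_classes s c') hne'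
  rw [ENNReal.rpow_one] at hadm ⊢
  calc min (wt r {x | CMP G r 1 x c}) (wt r {x | CMP G r 1 x c'})
      ≤ min (wt r {x | s x c}) (wt r {x | s x c'}) :=
        min_le_min (wt_mono r h1) (wt_mono r h2)
    _ < setDist G {x | s x c} {x | s x c'} := hadm
    _ ≤ setDist G {x | CMP G r 1 x c} {x | CMP G r 1 x c'} := setDist_anti h1 h2

end DualityAux2
section DualityAux3

open SimpleGraph

/-- The "split rigidity" of CMP classes: splitting a class into two nonempty parts
never satisfies the admissibility gap condition. -/
lemma cmp_split {W : Type*} (G : SimpleGraph W) (r : W → ℝ≥0) {D : Set W} {d : W}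
    (hD : D = {x | CMP G r 1 x d}) {S : Set W} (hS : S ⊆ D)
    (hne : S.Nonempty) (hne' : (D \ S).Nonempty) :
    setDist G S (D \ S) ≤ min (wt r S) (wt r (D \ S)) := by
  by_contra hcon
  push_neg at hcon
  set cmp := CMP G r 1 with hcmp
  have hmemD : ∀ x ∈ D, cmp x d := by intro x hx; rw [hD] at hx; exact hx
  have hDmem : ∀ x, cmp x d → x ∈ D := by intro x hx; rw [hD]; exact hx
  classical
  -- the split setoid
  set t : Setoid W := ⟨fun x y => cmp x y ∧ (x ∈ S ↔ y ∈ S),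
    ⟨fun x => ⟨cmp.refl' x, Iff.rfl⟩,
     fun h => ⟨cmp.symm' h.1, h.2.symm⟩,
     fun h h' => ⟨cmp.trans' h.1 h'.1, h.2.trans h'.2⟩⟩⟩ with ht
  have htrel : ∀ x y, t x y ↔ (cmp x y ∧ (x ∈ S ↔ y ∈ S)) := fun x y => Iff.rfl
  -- description of the two split classes
  have hclassS : ∀ c, cmp c d → c ∈ S → ({x | t x c} : Set W) = S := by
    intro c hcd hcS
    ext x
    simp only [Set.mem_setOf_eq, htrel]
    constructor
    · rintro ⟨-, hiff⟩; exact hiff.mpr hcS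
    · intro hxS
      exact ⟨rel_of_mem_class cmp (hmemD x (hS hxS)) hcd, by simp [hxS, hcS]⟩
  have hclassC : ∀ c, cmp c d → c ∉ S → ({x | t x c} : Set W) = D \ S := by
    intro c hcd hcS
    ext x
    simp only [Set.mem_setOf_eq, htrel]
    constructor
    · rintro ⟨hxc, hiff⟩
      refine ⟨hDmem x (cmp.trans' hxc hcd), fun hxS => hcS (hiff.mp hxS)⟩
    · rintro ⟨hxD, hxS⟩
      exact ⟨rel_of_mem_class cmp (hmemD x hxD) hcd, by simp [hxS, hcS]⟩
  -- t is admissible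
  have hadm : Admissible G r 1 t := by
    intro C hC C' hC' hne2
    obtain ⟨c, rfl⟩ := hC
    obtain ⟨c', rfl⟩ := hC'
    by_cases hcc : cmp c c'
    · -- same CMP class, S-membership must differ
      have hSdiff : ¬ (c ∈ S ↔ c' ∈ S) := by
        intro hiff
        exact hne2 (class_eq_of_rel t (by exact ⟨hcc, hiff⟩))
      have hcD : c ∈ D := by
        rcases Classical.em (c ∈ S) with h | h
        · exact hS h
        · have : c' ∈ S := by tauto
          exact hDmem c (cmp.trans' hcc (hmemD c' (hS this)))
      have hcd : cmp c d := hmemD c hcD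
      have hc'd : cmp c' d := cmp.trans' (cmp.symm' hcc) hcd
      rw [ENNReal.rpow_one]
      rcases Classical.em (c ∈ S) with h | h
      · have h' : c' ∉ S := by tauto
        rw [hclassS c hcd h, hclassC c' hc'd h']
        exact hcon
      · have h' : c' ∈ S := by tauto
        rw [hclassC c hcd h, hclassS c' hc'd h']
        rw [min_comm, setDist_comm']
        exact hcon
    · -- distinct CMP classes: use admissibility of CMP
      have h1 : ({x | t x c} : Set W) ⊆ {x | cmp x c} := fun x hx => hx.1
      have h2 : ({x | t x c'} : Set W) ⊆ {x | cmp x c'} := fun x hx => hx.1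
      have hne' : ({x | cmp x c} : Set W) ≠ {x | cmp x c'} := by
        intro heq
        refine hcc ?_
        have hc' : c' ∈ ({x | cmp x c'} : Set W) := cmp.refl' c'
        rw [← heq] at hc'
        exact cmp.symm' hc'
      have hadm' := cmp_admissible G r _ (Setoid.mem_classes cmp c) _
        (Setoid.mem_classes cmp c') hne'
      rw [ENNReal.rpow_one] at hadm' ⊢
      calc min (wt r {x | t x c}) (wt r {x | t x c'})
          ≤ min (wt r {x | cmp x c}) (wt r {x | cmp x c'}) :=
            min_le_min (wt_mono r h1) (wt_mono r h2)
        _ < setDist G {x | cmp x c} {x | cmp x c'} := hadm'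
        _ ≤ setDist G {x | t x c} {x | t x c'} := setDist_anti h1 h2
  -- contradiction: CMP refines t, but t separates S from D \ S
  obtain ⟨u, hu⟩ := hne
  obtain ⟨v, hv⟩ := hne'
  have huv : cmp u v := rel_of_mem_class cmp (hmemD u (hS hu)) (hmemD v hv.1)
  have : t u v := cmp_rel hadm huv
  exact hv.2 (((htrel u v).mp this).2.mp hu)

end DualityAux3
section DualityAux4

open SimpleGraph

variable {n : ℤ}

lemma GH_walk_len {x y : ↥(Set.Icc (0:ℤ) n)}
    (p : (pathGraphZ.induce (Set.Icc (0:ℤ) n)).Walk x y) :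
    (y.1 - x.1).natAbs ≤ p.length := by
  induction p with
  | nil => simp
  | @cons u v w h p ih =>
      rw [SimpleGraph.Walk.length_cons]
      have h' : pathGraphZ.Adj u.1 v.1 := h
      rw [pathZ_adj] at h'
      omega

lemma GH_reachable_aux (k : ℕ) : ∀ (x y : ↥(Set.Icc (0:ℤ) n)), y.1 - x.1 = k →
    (pathGraphZ.induce (Set.Icc (0:ℤ) n)).Reachable x y := by
  induction k with
  | zero =>
      intro x y h
      have hxy : x = y := Subtype.ext (by omega)
      rw [hxy]
  | succ m ih =>
      intro x y h
      have hx2 := x.2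
      have hy2 := y.2
      rw [Set.mem_Icc] at hx2 hy2
      have hmem : x.1 + 1 ∈ Set.Icc (0:ℤ) n := Set.mem_Icc.mpr ⟨by omega, by omega⟩
      have hadj : (pathGraphZ.induce (Set.Icc (0:ℤ) n)).Adj x ⟨x.1 + 1, hmem⟩ :=
        pathZ_adj_step x.1
      exact hadj.reachable.trans (ih ⟨x.1 + 1, hmem⟩ y (by simp only []; omega))

lemma GH_reachable (x y : ↥(Set.Icc (0:ℤ) n)) :
    (pathGraphZ.induce (Set.Icc (0:ℤ) n)).Reachable x y := by
  rcases le_total x.1 y.1 with h | h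
  · exact GH_reachable_aux (y.1 - x.1).toNat x y (by omega)
  · exact (GH_reachable_aux (x.1 - y.1).toNat y x (by omega)).symm

lemma GH_dist_ge (x y : ↥(Set.Icc (0:ℤ) n)) :
    (y.1 - x.1).natAbs ≤ (pathGraphZ.induce (Set.Icc (0:ℤ) n)).dist x y := by
  obtain ⟨p, hp⟩ := (GH_reachable x y).exists_walk_length_eq_dist
  rw [← hp]
  exact GH_walk_len p

/-- `d` lies strictly between `x` and `y`. -/
def IntBtw {n : ℤ} (x y d : ↥(Set.Icc (0:ℤ) n)) : Prop :=
  (x.1 < d.1 ∧ d.1 < y.1) ∨ (y.1 < d.1 ∧ d.1 < x.1)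

/-- The separating partition: weight-zero vertices are singletons; two weight-one
vertices are equivalent iff no element of `D` lies strictly between them. -/
def sepSetoid (n : ℤ) (r : ℤ → ℝ≥0) (D : Set ↥(Set.Icc (0:ℤ) n))
    (hD : ∀ d ∈ D, r d.1 = 0) : Setoid ↥(Set.Icc (0:ℤ) n) :=
  ⟨fun x y => x = y ∨ (r x.1 = 1 ∧ r y.1 = 1 ∧ ∀ d ∈ D, ¬ IntBtw x y d),
   ⟨fun x => Or.inl rfl,
    by
      rintro x y (rfl | ⟨hx, hy, hbtw⟩)
      · exact Or.inl rfl
      · refine Or.inr ⟨hy, hx, fun d hd hb => hbtw d hd ?_⟩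
        rcases hb with h | h
        · exact Or.inr h
        · exact Or.inl h,
    by
      rintro x y z (rfl | ⟨hx, hy, hxy⟩) h2
      · exact h2
      · rcases h2 with rfl | ⟨hy', hz, hyz⟩
        · exact Or.inr ⟨hx, hy, hxy⟩
        · refine Or.inr ⟨hx, hz, fun d hd hb => ?_⟩
          have hdz : r d.1 = 0 := hD d hd
          have hdy : d.1 ≠ y.1 := by
            intro he
            rw [show d = y from Subtype.ext he] at hdz
            rw [hdz] at hy
            exact zero_ne_one hy
          rcases hb with ⟨h1, h2⟩ | ⟨h1, h2⟩
          · rcases lt_trichotomy d.1 y.1 with hc | hc | hc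
            · exact hxy d hd (Or.inl ⟨h1, hc⟩)
            · exact hdy hc
            · exact hyz d hd (Or.inl ⟨hc, h2⟩)
          · rcases lt_trichotomy d.1 y.1 with hc | hc | hc
            · exact hyz d hd (Or.inr ⟨h1, hc⟩)
            · exact hdy hc
            · exact hxy d hd (Or.inr ⟨hc, h2⟩)⟩⟩

lemma sepSetoid_rel {n : ℤ} {r : ℤ → ℝ≥0} {D : Set ↥(Set.Icc (0:ℤ) n)}
    {hD : ∀ d ∈ D, r d.1 = 0} {x y : ↥(Set.Icc (0:ℤ) n)} :
    sepSetoid n r D hD x y ↔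
      (x = y ∨ (r x.1 = 1 ∧ r y.1 = 1 ∧ ∀ d ∈ D, ¬ IntBtw x y d)) := Iff.rfl

lemma sepSetoid_one_of_rel {n : ℤ} {r : ℤ → ℝ≥0} {D : Set ↥(Set.Icc (0:ℤ) n)}
    {hD : ∀ d ∈ D, r d.1 = 0} {x c : ↥(Set.Icc (0:ℤ) n)} (hc : r c.1 = 1)
    (h : sepSetoid n r D hD x c) : r x.1 = 1 := by
  rcases h with rfl | ⟨h1, -, -⟩
  · exact hc
  · exact h1

lemma sepSetoid_nobtw_of_rel {n : ℤ} {r : ℤ → ℝ≥0} {D : Set ↥(Set.Icc (0:ℤ) n)}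
    {hD : ∀ d ∈ D, r d.1 = 0} {x c : ↥(Set.Icc (0:ℤ) n)}
    (h : sepSetoid n r D hD x c) : ∀ d ∈ D, ¬ IntBtw x c d := by
  rcases h with rfl | ⟨-, -, h3⟩
  · intro d _ hb
    rcases hb with ⟨h1, h2⟩ | ⟨h1, h2⟩ <;> omega
  · exact h3

end DualityAux4
section DualityAux5

open SimpleGraph

lemma sep_pair (n : ℤ) (r : ℤ → ℝ≥0)
    (D : Set ↥(Set.Icc (0:ℤ) n)) (hD : ∀ d ∈ D, r d.1 = 0)
    (hFR : ∀ S ⊆ D, S.Nonempty → (D \ S).Nonempty →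
      ∃ x ∈ S, ∃ y ∈ D \ S, (x.1 - y.1).natAbs ≤ min S.ncard (D \ S).ncard)
    (hviol : ∃ a ∈ D, (a.1 + 1 ≤ (D.ncard : ℤ)) ∨ (n - a.1 + 1 ≤ (D.ncard : ℤ)))
    (c₁ c₂ : ↥(Set.Icc (0:ℤ) n)) (hc₁ : r c₁.1 = 1) (hc₂ : r c₂.1 = 1)
    (d₀ : ↥(Set.Icc (0:ℤ) n)) (hd₀ : d₀ ∈ D) (hb₁ : c₁.1 < d₀.1) (hb₂ : d₀.1 < c₂.1) :
    min (wt (fun x : ↥(Set.Icc (0:ℤ) n) => r ↑x) {x | sepSetoid n r D hD x c₁})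
        (wt (fun x : ↥(Set.Icc (0:ℤ) n) => r ↑x) {x | sepSetoid n r D hD x c₂})
      < setDist (pathGraphZ.induce (Set.Icc (0:ℤ) n))
          {x | sepSetoid n r D hD x c₁} {x | sepSetoid n r D hD x c₂} := by
  haveI : Finite ↥(Set.Icc (0:ℤ) n) := (Set.finite_Icc 0 n).to_subtype
  have hvalne : ∀ (u v : ↥(Set.Icc (0:ℤ) n)), r u.1 = 1 → v ∈ D → u.1 ≠ v.1 := by
    intro u v hu hv he
    have h0 := hD v hv
    rw [← he] at h0
    rw [h0] at hu
    exact zero_ne_one hu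
  -- all of D between the two classes separates them
  have hKB : ∀ d ∈ D, c₁.1 < d.1 → d.1 < c₂.1 →
      ∀ x ∈ {x | sepSetoid n r D hD x c₁}, ∀ y ∈ {x | sepSetoid n r D hD x c₂},
        x.1 < d.1 ∧ d.1 < y.1 := by
    intro d hd hd1 hd2 x hx y hy
    have hx1 : r x.1 = 1 := sepSetoid_one_of_rel (hD := hD) hc₁ hx
    have hy1 : r y.1 = 1 := sepSetoid_one_of_rel (hD := hD) hc₂ hy
    have hnb1 := sepSetoid_nobtw_of_rel (hD := hD) hx d hd
    have hnb2 := sepSetoid_nobtw_of_rel (hD := hD) hy d hd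
    simp only [IntBtw] at hnb1 hnb2
    have hxd : x.1 ≠ d.1 := hvalne x d hx1 hd
    have hyd : y.1 ≠ d.1 := hvalne y d hy1 hd
    omega
  have hc₁C : c₁ ∈ {x | sepSetoid n r D hD x c₁} := (sepSetoid n r D hD).refl' c₁
  have hc₂C : c₂ ∈ {x | sepSetoid n r D hD x c₂} := (sepSetoid n r D hD).refl' c₂
  set K : Set ↥(Set.Icc (0:ℤ) n) := {d | d ∈ D ∧ c₁.1 < d.1 ∧ d.1 < c₂.1} with hK
  have hKD : K ⊆ D := fun d hd => hd.1
  have hKne : K.Nonempty := ⟨d₀, hd₀, hb₁, hb₂⟩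
  -- distance lower bound
  have hdistlb : ((K.ncard + 1 : ℕ) : ℝ≥0∞) ≤
      setDist (pathGraphZ.induce (Set.Icc (0:ℤ) n))
        {x | sepSetoid n r D hD x c₁} {x | sepSetoid n r D hD x c₂} := by
    apply le_setDist
    intro x hx y hy
    have hbet : ∀ d ∈ K, x.1 < d.1 ∧ d.1 < y.1 :=
      fun d hd => hKB d hd.1 hd.2.1 hd.2.2 x hx y hy
    have hcount : (K.ncard : ℤ) ≤ y.1 - x.1 - 1 :=
      ncard_le_Ioo Subtype.val Subtype.val_injective hKne hbet
    have hnn : K.ncard + 1 ≤ (y.1 - x.1).natAbs := by omega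
    exact le_trans hnn (GH_dist_ge x y)
  -- one of the two classes is small
  have hsize : ({x | sepSetoid n r D hD x c₁} : Set _).ncard + 1 ≤ K.ncard ∨
      ({x | sepSetoid n r D hD x c₂} : Set _).ncard + 1 ≤ K.ncard := by
    by_cases hDK : D ⊆ K
    · have hKeq : K = D := Set.Subset.antisymm hKD hDK
      obtain ⟨a, haD, hv⟩ := hviol
      have haK := hDK haD
      rcases hv with hv | hv
      · left
        have hbet : ∀ x ∈ {x | sepSetoid n r D hD x c₁}, (-1:ℤ) < x.1 ∧ x.1 < a.1 := by
          intro x hx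
          have h1 := (hKB a haD haK.2.1 haK.2.2 x hx c₂ hc₂C).1
          have hx2 := x.2
          rw [Set.mem_Icc] at hx2
          omega
        have hcard := ncard_le_Ioo Subtype.val Subtype.val_injective ⟨c₁, hc₁C⟩ hbet
        rw [hKeq]
        omega
      · right
        have hbet : ∀ y ∈ {x | sepSetoid n r D hD x c₂}, a.1 < y.1 ∧ y.1 < n + 1 := by
          intro y hy
          have h1 := (hKB a haD haK.2.1 haK.2.2 c₁ hc₁C y hy).2
          have hy2 := y.2
          rw [Set.mem_Icc] at hy2
          omega
        have hcard := ncard_le_Ioo Subtype.val Subtype.val_injective ⟨c₂, hc₂C⟩ hbet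
        rw [hKeq]
        omega
    · obtain ⟨xb, hxbK, yb, hybDK, hclose⟩ :=
        hFR K hKD hKne (Set.diff_nonempty.mpr hDK)
      have hclose' : (xb.1 - yb.1).natAbs ≤ K.ncard :=
        le_trans hclose (min_le_left _ _)
      have hybD : yb ∈ D := hybDK.1
      have hybnK : ¬(c₁.1 < yb.1 ∧ yb.1 < c₂.1) := fun hcon => hybDK.2 ⟨hybD, hcon⟩
      have hyc₁ : c₁.1 ≠ yb.1 := hvalne c₁ yb hc₁ hybD
      have hyc₂ : c₂.1 ≠ yb.1 := hvalne c₂ yb hc₂ hybD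
      have hxbb := hxbK.2
      have hc12 : c₁.1 < c₂.1 := by omega
      rcases (show yb.1 < c₁.1 ∨ c₂.1 < yb.1 by omega) with hyl | hyr
      · left
        have hbet : ∀ x ∈ {x | sepSetoid n r D hD x c₁}, yb.1 < x.1 ∧ x.1 < xb.1 := by
          intro x hx
          have hx1 : r x.1 = 1 := sepSetoid_one_of_rel (hD := hD) hc₁ hx
          have hnb := sepSetoid_nobtw_of_rel (hD := hD) hx yb hybD
          simp only [IntBtw] at hnb
          have hxyb : x.1 ≠ yb.1 := hvalne x yb hx1 hybD
          have hxxb := (hKB xb hxbK.1 hxbb.1 hxbb.2 x hx c₂ hc₂C).1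
          omega
        have hcard := ncard_le_Ioo Subtype.val Subtype.val_injective ⟨c₁, hc₁C⟩ hbet
        omega
      · right
        have hbet : ∀ y ∈ {x | sepSetoid n r D hD x c₂}, xb.1 < y.1 ∧ y.1 < yb.1 := by
          intro y hy
          have hy1 : r y.1 = 1 := sepSetoid_one_of_rel (hD := hD) hc₂ hy
          have hnb := sepSetoid_nobtw_of_rel (hD := hD) hy yb hybD
          simp only [IntBtw] at hnb
          have hyyb : y.1 ≠ yb.1 := hvalne y yb hy1 hybD
          have hyxb := (hKB xb hxbK.1 hxbb.1 hxbb.2 c₁ hc₁C y hy).2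
          omega
        have hcard := ncard_le_Ioo Subtype.val Subtype.val_injective ⟨c₂, hc₂C⟩ hbet
        omega
  -- weights are cardinalities
  have hwt₁ : wt (fun x : ↥(Set.Icc (0:ℤ) n) => r ↑x) {x | sepSetoid n r D hD x c₁}
      = (({x | sepSetoid n r D hD x c₁} : Set _).ncard : ℝ≥0∞) :=
    wt_eq_ncard _ (fun x hx => sepSetoid_one_of_rel (hD := hD) hc₁ hx)
  have hwt₂ : wt (fun x : ↥(Set.Icc (0:ℤ) n) => r ↑x) {x | sepSetoid n r D hD x c₂}
      = (({x | sepSetoid n r D hD x c₂} : Set _).ncard : ℝ≥0∞) :=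
    wt_eq_ncard _ (fun x hx => sepSetoid_one_of_rel (hD := hD) hc₂ hx)
  rcases hsize with hs | hs
  · refine lt_of_le_of_lt (le_trans (min_le_left _ _) (le_of_eq hwt₁)) ?_
    refine lt_of_lt_of_le ?_ hdistlb
    have hlt : ({x | sepSetoid n r D hD x c₁} : Set _).ncard < K.ncard + 1 := by omega
    exact_mod_cast hlt
  · refine lt_of_le_of_lt (le_trans (min_le_right _ _) (le_of_eq hwt₂)) ?_
    refine lt_of_lt_of_le ?_ hdistlb
    have hlt : ({x | sepSetoid n r D hD x c₂} : Set _).ncard < K.ncard + 1 := by omega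
    exact_mod_cast hlt

end DualityAux5
section DualityAux6

open SimpleGraph

lemma sep_admissible (n : ℤ) (r : ℤ → ℝ≥0)
    (hr : ∀ x ∈ Set.Icc (0 : ℤ) n, r x = 0 ∨ r x = 1)
    (D : Set ↥(Set.Icc (0:ℤ) n)) (hD : ∀ d ∈ D, r d.1 = 0)
    (hFR : ∀ S ⊆ D, S.Nonempty → (D \ S).Nonempty →
      ∃ x ∈ S, ∃ y ∈ D \ S, (x.1 - y.1).natAbs ≤ min S.ncard (D \ S).ncard)
    (hviol : ∃ a ∈ D, (a.1 + 1 ≤ (D.ncard : ℤ)) ∨ (n - a.1 + 1 ≤ (D.ncard : ℤ))) :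
    Admissible (pathGraphZ.induce (Set.Icc (0:ℤ) n))
      (fun x : ↥(Set.Icc (0:ℤ) n) => r ↑x) 1 (sepSetoid n r D hD) := by
  intro C hC C' hC' hne
  obtain ⟨c, rfl⟩ := hC
  obtain ⟨c', rfl⟩ := hC'
  rw [ENNReal.rpow_one]
  -- distinct classes are disjoint, so the distance is at least 1
  have hdisj : ∀ x, x ∈ ({z | sepSetoid n r D hD z c} : Set _) →
      x ∉ ({z | sepSetoid n r D hD z c'} : Set _) := by
    intro x hx hx'
    exact hne ((class_eq_of_rel _ hx).symm.trans (class_eq_of_rel _ hx'))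
  have hpos : ((1:ℕ) : ℝ≥0∞) ≤ setDist (pathGraphZ.induce (Set.Icc (0:ℤ) n))
      {z | sepSetoid n r D hD z c} {z | sepSetoid n r D hD z c'} := by
    apply le_setDist
    intro x hx y hy
    have hxy : x ≠ y := fun he => hdisj x hx (he ▸ hy)
    have hv : x.1 ≠ y.1 := fun he => hxy (Subtype.ext he)
    have h1 : 1 ≤ (y.1 - x.1).natAbs := by omega
    exact le_trans h1 (GH_dist_ge x y)
  rcases hr c.1 c.2 with h0 | h1
  · -- the class of c is the singleton {c} of weight 0
    have hwt0 : wt (fun x : ↥(Set.Icc (0:ℤ) n) => r ↑x) {z | sepSetoid n r D hD z c} = 0 := by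
      have hcl : ({z | sepSetoid n r D hD z c} : Set _) = {c} := by
        ext x
        simp only [Set.mem_setOf_eq, Set.mem_singleton_iff]
        constructor
        · rintro (rfl | ⟨-, hc1, -⟩)
          · rfl
          · rw [h0] at hc1; exact absurd hc1 zero_ne_one
        · intro hx
          exact (sepSetoid_rel (hD := hD)).mpr (Or.inl hx)
      rw [hcl, wt_singleton']
      rw [h0]
      exact ENNReal.coe_zero
    have hminz : min (wt (fun x : ↥(Set.Icc (0:ℤ) n) => r ↑x) {z | sepSetoid n r D hD z c})
        (wt (fun x : ↥(Set.Icc (0:ℤ) n) => r ↑x) {z | sepSetoid n r D hD z c'}) = 0 :=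
      le_antisymm (hwt0 ▸ min_le_left _ _) zero_le
    rw [hminz]
    exact lt_of_lt_of_le (by norm_num) hpos
  rcases hr c'.1 c'.2 with h0' | h1'
  · have hwt0 : wt (fun x : ↥(Set.Icc (0:ℤ) n) => r ↑x) {z | sepSetoid n r D hD z c'} = 0 := by
      have hcl : ({z | sepSetoid n r D hD z c'} : Set _) = {c'} := by
        ext x
        simp only [Set.mem_setOf_eq, Set.mem_singleton_iff]
        constructor
        · rintro (rfl | ⟨-, hc1, -⟩)
          · rfl
          · rw [h0'] at hc1; exact absurd hc1 zero_ne_one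
        · intro hx
          exact (sepSetoid_rel (hD := hD)).mpr (Or.inl hx)
      rw [hcl, wt_singleton']
      rw [h0']
      exact ENNReal.coe_zero
    have hminz : min (wt (fun x : ↥(Set.Icc (0:ℤ) n) => r ↑x) {z | sepSetoid n r D hD z c})
        (wt (fun x : ↥(Set.Icc (0:ℤ) n) => r ↑x) {z | sepSetoid n r D hD z c'}) = 0 :=
      le_antisymm (hwt0 ▸ min_le_right _ _) zero_le
    rw [hminz]
    exact lt_of_lt_of_le (by norm_num) hpos
  -- both representatives have weight one
  have hnrel : ¬ sepSetoid n r D hD c c' := not_rel_of_classes_ne _ hne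
  rw [sepSetoid_rel] at hnrel
  push_neg at hnrel
  obtain ⟨-, hbtw⟩ := hnrel
  obtain ⟨d₀, hd₀, hb⟩ := hbtw h1 h1'
  rcases hb with ⟨hb1, hb2⟩ | ⟨hb1, hb2⟩
  · exact sep_pair n r D hD hFR hviol c c' h1 h1' d₀ hd₀ hb1 hb2
  · rw [min_comm, setDist_comm']
    exact sep_pair n r D hD hFR hviol c' c h1' h1 d₀ hd₀ hb1 hb2

end DualityAux6
/-- Duality on `ℤ` for `α = 1` and `{0,1}`-valued weights: if in the CMP of the path
`I_n = {0,…,n}` the endpoints `0` and `n` lie in the same cluster, then `I_n`, viewed as a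
subset of `ℤ`, is stable for the CMP constructed from the reversed weights `r̃ = 1 − r`. -/
theorem duality_on_Z
    (n : ℤ) (hn : 1 ≤ n) (r : ℤ → ℝ≥0)
    (hr : ∀ x ∈ Set.Icc (0 : ℤ) n, r x = 0 ∨ r x = 1)
    (h0 : (0 : ℤ) ∈ Set.Icc (0 : ℤ) n) (hnmem : n ∈ Set.Icc (0 : ℤ) n)
    (hsame : (CMP (pathGraphZ.induce (Set.Icc (0 : ℤ) n))
        (fun x : ↥(Set.Icc (0 : ℤ) n) => r ↑x) 1) ⟨0, h0⟩ ⟨n, hnmem⟩) :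
    IsStable pathGraphZ (fun x => 1 - r x) 1 (Set.Icc (0 : ℤ) n) := by
  classical
  haveI : Finite ↥(Set.Icc (0:ℤ) n) := (Set.finite_Icc 0 n).to_subtype
  intro C hC z hz
  by_contra hzH
  obtain ⟨a', ha', hdist⟩ := hz
  obtain ⟨a, haC, rfl⟩ := ha'
  obtain ⟨c, hCc⟩ := hC
  rw [ENNReal.rpow_one] at hdist
  rw [Set.mem_Icc] at hzH
  have ha2 := a.2
  rw [Set.mem_Icc] at ha2
  have hzz : z < 0 ∨ n < z := by omega
  have hne_za : z ≠ a.1 := by omega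
  have hd1 := le_trans (show ((a.1 - z).natAbs : ℝ≥0∞) ≤ (pathGraphZ.dist z a.1 : ℝ≥0∞) by
    exact_mod_cast pathZ_dist_ge z a.1) hdist
  -- every element of the cluster has weight zero for r
  have hsing_ne : ∀ u ∈ C, r u.1 = 1 → False := by
    intro u hu h1u
    by_cases hCu : C = {u}
    · rw [hCu] at hd1
      have h2 := le_trans hd1 (le_of_eq (wt_singleton' _ u))
      simp only [h1u, tsub_self] at h2
      simp only [ENNReal.coe_zero, nonpos_iff_eq_zero, Nat.cast_eq_zero] at h2
      omega
    · have hdiff : (C \ {u}).Nonempty := Set.diff_nonempty.mpr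
        (fun hsub => hCu (Set.Subset.antisymm hsub (Set.singleton_subset_iff.mpr hu)))
      have hsplit := cmp_split _ _ hCc (Set.singleton_subset_iff.mpr hu)
        ⟨u, rfl⟩ hdiff
      have hds : setDist (pathGraphZ.induce (Set.Icc (0:ℤ) n)) {u} (C \ {u}) ≤ 0 := by
        refine le_trans hsplit (le_trans (min_le_left _ _) ?_)
        refine le_of_eq ?_
        refine (wt_singleton' _ u).trans ?_
        simp [h1u]
      have hge : ((1:ℕ) : ℝ≥0∞) ≤
          setDist (pathGraphZ.induce (Set.Icc (0:ℤ) n)) {u} (C \ {u}) := by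
        apply le_setDist
        intro x hx y hy
        have hxu : x = u := hx
        have hyu : ¬ y = u := hy.2
        have hval : y.1 ≠ x.1 := by
          rw [hxu]
          exact fun he => hyu (Subtype.ext he)
        have h1 : 1 ≤ (y.1 - x.1).natAbs := by omega
        exact le_trans h1 (GH_dist_ge x y)
      have : ((1:ℕ) : ℝ≥0∞) ≤ 0 := le_trans hge hds
      simp at this
  have hDZ : ∀ u ∈ C, r u.1 = 0 := by
    intro u hu
    rcases hr u.1 u.2 with h | h
    · exact h
    · exact absurd h (fun hh => hsing_ne u hu hh)
  -- the weight of the cluster is its cardinality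
  have hwtC := wt_eq_ncard (fun x : ↥(Set.Icc (0:ℤ) n) => 1 - r ↑x)
    (C := C) (fun x hx => by simp [hDZ x hx])
  have hcast : (a.1 - z).natAbs ≤ C.ncard := by
    have h3 := le_trans hd1 (le_of_eq hwtC)
    exact_mod_cast h3
  have hviol : ∃ b ∈ C, (b.1 + 1 ≤ (C.ncard : ℤ)) ∨ (n - b.1 + 1 ≤ (C.ncard : ℤ)) :=
    ⟨a, haC, by omega⟩
  -- split rigidity in the combinatorial form
  have hFR : ∀ S ⊆ C, S.Nonempty → (C \ S).Nonempty →
      ∃ x ∈ S, ∃ y ∈ C \ S, (x.1 - y.1).natAbs ≤ min S.ncard (C \ S).ncard := by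
    intro S hS hne1 hne2
    have hsplit := cmp_split _ _ hCc hS hne1 hne2
    have hwS := wt_eq_ncard (fun x : ↥(Set.Icc (0:ℤ) n) => 1 - r ↑x)
      (C := S) (fun x hx => by simp [hDZ x (hS hx)])
    have hwS' := wt_eq_ncard (fun x : ↥(Set.Icc (0:ℤ) n) => 1 - r ↑x)
      (C := C \ S) (fun x hx => by simp [hDZ x hx.1])
    by_contra hcon
    push_neg at hcon
    have hge : ((min S.ncard (C \ S).ncard + 1 : ℕ) : ℝ≥0∞) ≤
        setDist (pathGraphZ.induce (Set.Icc (0:ℤ) n)) S (C \ S) := by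
      apply le_setDist
      intro x hx y hy
      have h1 := hcon x hx y hy
      have h2 : min S.ncard (C \ S).ncard + 1 ≤ (y.1 - x.1).natAbs := by omega
      exact le_trans h2 (GH_dist_ge x y)
    have hle : setDist (pathGraphZ.induce (Set.Icc (0:ℤ) n)) S (C \ S) ≤
        ((min S.ncard (C \ S).ncard : ℕ) : ℝ≥0∞) := by
      refine le_trans hsplit ?_
      refine le_trans (le_of_eq ?_) le_rfl
      refine (congrArg₂ min hwS hwS').trans ?_
      exact ((Nat.mono_cast (α := ℝ≥0∞)).map_min).symm
    have h4 := le_trans hge hle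
    have h5 : min S.ncard (C \ S).ncard + 1 ≤ min S.ncard (C \ S).ncard := by
      exact_mod_cast h4
    omega
  -- the separating partition is admissible, contradicting `hsame`
  have hadm := sep_admissible n r hr C hDZ hFR hviol
  have hrel := cmp_rel hadm hsame
  rcases hrel with heq | ⟨hr0, hrn, hnb⟩
  · have h6 : (0:ℤ) = n := congrArg Subtype.val heq
    omega
  · have hA0 : r a.1 = 0 := hDZ a haC
    have haz : a.1 ≠ 0 := by
      intro h
      rw [h] at hA0
      exact absurd (hA0.symm.trans hr0) (by norm_num)
    have han : a.1 ≠ n := by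
      intro h
      rw [h] at hA0
      exact absurd (hA0.symm.trans hrn) (by norm_num)
    refine hnb a haC (Or.inl ⟨?_, ?_⟩)
    · show (0:ℤ) < a.1
      omega
    · show a.1 < n
      omega

end CMPPaper
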